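/- For all integers k ≥ 1 and n ≥ 1, the number of k-box paths of size n + 1 with exactly two long ascents equals n · ((k+1)(n+1) − 2) / 2, which is the n-th second (k+3)-gonal number (the value obtained by substituting −n for n in the formula (n/2)((K−2)n − (K−4)) for the n-th K-gonal number, with K = k+3). -/

import Mathlib

/-- The step alphabet for skew Dyck paths: up, down, left. -/
inductive Step : Type
  | U | D | L
  deriving DecidableEq

/-- Number of U steps in a word. -/
def countU (w : List Step) : ℕ := w.count Step.U
/-- Number of D steps in a word. -/
def countD (w : List Step) : ℕ := w.count Step.D
/-- Number of L steps in a word. -/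
def countL (w : List Step) : ℕ := w.count Step.L

/-- A skew Dyck path: every prefix has at least as many U's as D's and L's combined,
the totals balance, and there is no factor `UL` or `LU`. -/
def IsSkewDyck (w : List Step) : Prop :=
  (∀ p, p <+: w → countD p + countL p ≤ countU p) ∧
  countU w = countD w + countL w ∧
  ¬ [Step.U, Step.L] <:+: w ∧ ¬ [Step.L, Step.U] <:+: w

/-- The semilength of a skew Dyck path is its number of U's. -/
def semilength (w : List Step) : ℕ := countU w

/-- The factor `U D^k L`. -/
def boxFactor (k : ℕ) : List Step := Step.U :: (List.replicate k Step.D ++ [Step.L])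

/-- The number of occurrences (starting positions) of `f` as a factor (contiguous
subword) of `w`. -/
def numOccurrences (f w : List Step) : ℕ :=
  ((Finset.range (w.length + 1)).filter (fun i => f <+: w.drop i)).card

/-- A `k`-box path of size `n`: a skew Dyck path of semilength `(k+2)n - 1` with
exactly `n` occurrences of the factor `U D^k L`. -/
def IsBoxPath (k n : ℕ) (w : List Step) : Prop :=
  IsSkewDyck w ∧ semilength w = (k+2)*n - 1 ∧ numOccurrences (boxFactor k) w = n

/-- Number of returns: positions `i` such that the `(i+1)`-st letter is a `D` or `L`
and the prefix of length `i+1` is balanced (the path returns to the x-axis). -/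
def numReturns (w : List Step) : ℕ :=
  ((Finset.range w.length).filter (fun i =>
    (w[i]? = some Step.D ∨ w[i]? = some Step.L) ∧
    countU (w.take (i+1)) = countD (w.take (i+1)) + countL (w.take (i+1)))).card

/-- Number of long ascents: maximal runs of consecutive U's of length at least 2,
counted via their starting positions. -/
def numLongAscents (w : List Step) : ℕ :=
  ((Finset.range w.length).filter (fun i =>
    w[i]? = some Step.U ∧ w[i+1]? = some Step.U ∧
    (i = 0 ∨ w[i-1]? ≠ some Step.U))).card

/-- The word `U^{a_1} D^k L D U^{a_2} D^k L D ⋯ U^{a_{n-1}} D^k L D U^{a_n} D^k L`. -/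
def boxForm (k : ℕ) : List ℕ → List Step
  | [] => []
  | [a] => List.replicate a Step.U ++ List.replicate k Step.D ++ [Step.L]
  | a :: b :: rest =>
      List.replicate a Step.U ++ List.replicate k Step.D ++ [Step.L, Step.D] ++
        boxForm k (b :: rest)

/-- A block `U^b D^{k-1} L D` of an augmented `k`-Dyck path. -/
def augBlock (k b : ℕ) : List Step :=
  List.replicate b Step.U ++ List.replicate (k-1) Step.D ++ [Step.L, Step.D]

/-- The word `U^{b_1} D^{k-1} L D ⋯ U^{b_m} D^{k-1} L D`. -/
def augForm (k : ℕ) (b : List ℕ) : List Step := (b.map (augBlock k)).flatten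

/-- An augmented `k`-Dyck path: a skew Dyck path of the form
`U^{b_1} D^{k-1} L D ⋯ U^{b_m} D^{k-1} L D` with all `b_i` positive. -/
def IsAugmented (k : ℕ) (w : List Step) : Prop :=
  IsSkewDyck w ∧ ∃ b : List ℕ, (∀ x ∈ b, 0 < x) ∧ w = augForm k b

/-- An augmented `k`-Dyck path of size `m`. -/
def IsAugmentedOfSize (k m : ℕ) (w : List Step) : Prop :=
  IsSkewDyck w ∧ ∃ b : List ℕ, b.length = m ∧ (∀ x ∈ b, 0 < x) ∧ w = augForm k b

/-- A tailed `k`-box path ends with the factor `U^{k+1} D^k L`. -/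
def Tailed (k : ℕ) (w : List Step) : Prop :=
  (List.replicate (k+1) Step.U ++ List.replicate k Step.D ++ [Step.L]) <:+ w

/-! ### occurrence counting recursions -/

lemma numOccurrences_cons (f : List Step) (x : Step) (w : List Step) :
    numOccurrences f (x :: w) = numOccurrences f w + (if f <+: x :: w then 1 else 0) := by
  unfold numOccurrences
  rw [Finset.card_filter, Finset.card_filter]
  have hlen : (x :: w).length + 1 = (w.length + 1) + 1 := by simp
  rw [hlen, Finset.sum_range_succ']
  simp only [List.drop_succ_cons, List.drop_zero]

lemma numOccurrences_nil (k : ℕ) : numOccurrences (boxFactor k) [] = 0 := by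
  simp [numOccurrences, boxFactor]

lemma numOccurrences_cons_ne (k : ℕ) {x : Step} (hx : x ≠ Step.U) (w : List Step) :
    numOccurrences (boxFactor k) (x :: w) = numOccurrences (boxFactor k) w := by
  rw [numOccurrences_cons]
  have : ¬ (boxFactor k <+: x :: w) := by
    rw [boxFactor, List.cons_prefix_cons]
    rintro ⟨h, -⟩; exact hx h.symm
  simp [this]

lemma numOccurrences_append_nonU (k : ℕ) : ∀ (z w : List Step), (∀ c ∈ z, c ≠ Step.U) →
    numOccurrences (boxFactor k) (z ++ w) = numOccurrences (boxFactor k) w := by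
  intro z
  induction z with
  | nil => simp
  | cons c z ih =>
      intro w hz
      rw [List.cons_append, numOccurrences_cons_ne k (hz c (by simp)), ih w (fun c hc => hz c (by simp [hc]))]

/-! ### long ascent recursion -/

def laAux : Option Step → List Step → ℕ
  | _, [] => 0
  | prev, x :: w =>
      (if x = Step.U ∧ w.head? = some Step.U ∧ prev ≠ some Step.U then 1 else 0) + laAux (some x) w

lemma laAux_spec : ∀ (w : List Step) (prev : Option Step),
    ((Finset.range w.length).filter (fun i =>
      w[i]? = some Step.U ∧ w[i+1]? = some Step.U ∧
      (if i = 0 then prev else w[i-1]?) ≠ some Step.U)).card = laAux prev w := by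
  intro w
  induction w with
  | nil => intro prev; simp [laAux]
  | cons x w ih =>
      intro prev
      rw [Finset.card_filter]
      have hlen : (x :: w).length = w.length + 1 := rfl
      rw [hlen, Finset.sum_range_succ']
      have h1 : ∀ i, (if ((x :: w)[i+1]? = some Step.U ∧ (x :: w)[i+2]? = some Step.U ∧
          (if i + 1 = 0 then prev else (x :: w)[i+1-1]?) ≠ some Step.U) then 1 else 0)
          = (if (w[i]? = some Step.U ∧ w[i+1]? = some Step.U ∧
          (if i = 0 then some x else w[i-1]?) ≠ some Step.U) then 1 else 0) := by
        intro i
        congr 1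
        have e1 : (x :: w)[i+1]? = w[i]? := by simp
        have e2 : (x :: w)[i+2]? = w[i+1]? := by simp
        have e3 : (if i + 1 = 0 then prev else (x :: w)[i+1-1]?) = (if i = 0 then some x else w[i-1]?) := by
          cases i with
          | zero => simp
          | succ j => simp
        rw [e1, e2, e3]
      simp only [h1]
      rw [← Finset.card_filter, ih (some x)]
      cases w with
      | nil => simp [laAux]
      | cons y t =>
          have e2 : (x :: y :: t)[1]? = some y := by simp
          simp only [List.getElem?_cons_zero, e2, if_true, laAux, List.head?_cons]
          simp only [Option.some_inj]
          exact Nat.add_comm _ _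

lemma numLongAscents_eq_laAux (w : List Step) : numLongAscents w = laAux none w := by
  rw [← laAux_spec w none]
  unfold numLongAscents
  congr 1
  apply Finset.filter_congr
  intro i _
  by_cases hi : i = 0 <;> simp [hi]

/-! ### laAux computations -/

lemma laAux_head_ne {w : List Step} (h : w.head? ≠ some Step.U) (p q : Option Step) :
    laAux p w = laAux q w := by
  cases w with
  | nil => rfl
  | cons x t =>
      have hx : ¬ (x = Step.U) := by simp at h; intro hh; exact h hh
      simp [laAux, hx]

lemma laAux_cons_nonU {x : Step} (hx : x ≠ Step.U) (p : Option Step) (w : List Step) :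
    laAux p (x :: w) = laAux (some x) w := by
  simp [laAux, hx]

lemma laAux_repU_U : ∀ (a : ℕ) (w : List Step),
    laAux (some Step.U) (List.replicate a Step.U ++ w) = laAux (some Step.U) w := by
  intro a
  induction a with
  | zero => simp
  | succ m ih =>
      intro w
      rw [List.replicate_succ, List.cons_append]
      rw [show laAux (some Step.U) (Step.U :: (List.replicate m Step.U ++ w)) =
        (if Step.U = Step.U ∧ (List.replicate m Step.U ++ w).head? = some Step.U ∧
          (some Step.U : Option Step) ≠ some Step.U then 1 else 0) + laAux (some Step.U) (List.replicate m Step.U ++ w) from rfl]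
      simp [ih]

lemma laAux_repU {w : List Step} (h : w.head? ≠ some Step.U) {p : Option Step} (hp : p ≠ some Step.U)
    {a : ℕ} (ha : 1 ≤ a) :
    laAux p (List.replicate a Step.U ++ w) = (if 2 ≤ a then 1 else 0) + laAux p w := by
  obtain ⟨m, rfl⟩ : ∃ m, a = m + 1 := ⟨a - 1, by omega⟩
  cases m with
  | zero =>
      simp only [List.replicate_succ, List.replicate_zero, List.nil_append, List.cons_append]
      rw [show laAux p (Step.U :: w) =
        (if Step.U = Step.U ∧ w.head? = some Step.U ∧ p ≠ some Step.U then 1 else 0) + laAux (some Step.U) w from rfl]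
      rw [laAux_head_ne h (some Step.U) p]
      simp [h]
  | succ m =>
      rw [List.replicate_succ, List.cons_append]
      rw [show laAux p (Step.U :: (List.replicate (m+1) Step.U ++ w)) =
        (if Step.U = Step.U ∧ (List.replicate (m+1) Step.U ++ w).head? = some Step.U ∧ p ≠ some Step.U then 1 else 0)
          + laAux (some Step.U) (List.replicate (m+1) Step.U ++ w) from rfl]
      rw [laAux_repU_U, laAux_head_ne h (some Step.U) p]
      simp [List.replicate_succ, hp]

lemma laAux_repD : ∀ (j : ℕ) (w : List Step),
    laAux (some Step.D) (List.replicate j Step.D ++ w) = laAux (some Step.D) w := by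
  intro j
  induction j with
  | zero => simp
  | succ m ih =>
      intro w
      rw [List.replicate_succ, List.cons_append, laAux_cons_nonU (by simp) _ _, ih]

/-! ### Pre : prefix-condition with slack -/

def Pre (c : ℕ) (w : List Step) : Prop :=
  ∀ p, p <+: w → countD p + countL p ≤ c + countU p

lemma pre_nil (c : ℕ) : Pre c [] := by
  intro p hp
  rw [List.prefix_nil] at hp
  subst hp
  simp [countU, countD, countL]

lemma countU_cons (x : Step) (w : List Step) :
    countU (x :: w) = countU w + (if x = Step.U then 1 else 0) := by
  cases x <;> simp [countU, List.count_cons]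

lemma countD_cons (x : Step) (w : List Step) :
    countD (x :: w) = countD w + (if x = Step.D then 1 else 0) := by
  cases x <;> simp [countD, List.count_cons]

lemma countL_cons (x : Step) (w : List Step) :
    countL (x :: w) = countL w + (if x = Step.L then 1 else 0) := by
  cases x <;> simp [countL, List.count_cons]

lemma pre_cons_U {c : ℕ} {w : List Step} (h : Pre (c+1) w) : Pre c (Step.U :: w) := by
  intro p hp
  cases p with
  | nil => simp [countU, countD, countL]
  | cons x q =>
      rw [List.cons_prefix_cons] at hp
      obtain ⟨rfl, hq⟩ := hp
      have := h q hq
      simp [countU_cons, countD_cons, countL_cons]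
      omega

lemma pre_cons_D {c : ℕ} {w : List Step} (h : Pre c w) : Pre (c+1) (Step.D :: w) := by
  intro p hp
  cases p with
  | nil => simp [countU, countD, countL]
  | cons x q =>
      rw [List.cons_prefix_cons] at hp
      obtain ⟨rfl, hq⟩ := hp
      have := h q hq
      simp [countU_cons, countD_cons, countL_cons]
      omega

lemma pre_cons_L {c : ℕ} {w : List Step} (h : Pre c w) : Pre (c+1) (Step.L :: w) := by
  intro p hp
  cases p with
  | nil => simp [countU, countD, countL]
  | cons x q =>
      rw [List.cons_prefix_cons] at hp
      obtain ⟨rfl, hq⟩ := hp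
      have := h q hq
      simp [countU_cons, countD_cons, countL_cons]
      omega

lemma pre_repU {w : List Step} : ∀ (a : ℕ) {c : ℕ}, Pre (c + a) w → Pre c (List.replicate a Step.U ++ w) := by
  intro a
  induction a with
  | zero => intro c h; simpa using h
  | succ m ih =>
      intro c h
      rw [List.replicate_succ, List.cons_append]
      exact pre_cons_U (ih (by rw [show c + 1 + m = c + (m+1) by omega]; exact h))

lemma pre_repD {c : ℕ} {w : List Step} (h : Pre c w) : ∀ (j : ℕ), Pre (c + j) (List.replicate j Step.D ++ w) := by
  intro j
  induction j with
  | zero => simpa using h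
  | succ m ih =>
      rw [List.replicate_succ, List.cons_append, show c + (m+1) = (c+m) + 1 by omega]
      exact pre_cons_D ih

/-! ### boxForm structure -/

lemma boxForm_single (k x : ℕ) :
    boxForm k [x] = List.replicate x Step.U ++ (List.replicate k Step.D ++ [Step.L]) := by
  simp [boxForm]

lemma boxForm_cons (k x b : ℕ) (rest : List ℕ) :
    boxForm k (x :: b :: rest) =
      List.replicate x Step.U ++ (List.replicate k Step.D ++ (Step.L :: Step.D :: boxForm k (b :: rest))) := by
  simp [boxForm]

lemma boxForm_succ_cons (k x : ℕ) (rest : List ℕ) :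
    boxForm k ((x+1) :: rest) = Step.U :: boxForm k (x :: rest) := by
  cases rest <;> simp [boxForm, List.replicate_succ]

lemma boxForm_pos_head {k : ℕ} {a : ℕ} (ha : 0 < a) (rest : List ℕ) :
    ∃ t, boxForm k (a :: rest) = Step.U :: t := by
  obtain ⟨m, rfl⟩ : ∃ m, a = m + 1 := ⟨a - 1, by omega⟩
  exact ⟨boxForm k (m :: rest), boxForm_succ_cons k m rest⟩

lemma count_replicate_self (x : Step) (n : ℕ) : (List.replicate n x).count x = n := by
  simp

lemma countU_boxForm (k : ℕ) : ∀ (a : List ℕ), countU (boxForm k a) = a.sum := by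
  intro a
  induction a with
  | nil => rfl
  | cons x rest ih =>
      cases rest with
      | nil => simp [boxForm_single, countU, List.count_append, List.count_replicate]
      | cons b r =>
          rw [boxForm_cons]
          simp only [countU, List.count_append, List.count_cons, List.count_replicate] at *
          simp at *
          omega

lemma countDL_boxForm (k : ℕ) : ∀ (a : List ℕ), a ≠ [] →
    countD (boxForm k a) + countL (boxForm k a) + 1 = (k+2) * a.length := by
  intro a
  induction a with
  | nil => intro h; exact absurd rfl h
  | cons x rest ih =>
      intro _
      cases rest with
      | nil =>
          simp [boxForm_single, countD, countL, List.count_append, List.count_replicate]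
      | cons b r =>
          rw [boxForm_cons]
          have hih := ih (by simp)
          simp only [countD, countL, List.count_append, List.count_cons, List.count_replicate,
            List.length_cons] at hih ⊢
          simp at hih ⊢
          have hm : (k+2) * (r.length + 1) + (k+2) = (k+2) * (r.length + 1 + 1) := by ring
          omega

/-! ### Chain' -/

def Good : Step → Step → Prop := fun x y =>
  ¬(x = Step.U ∧ y = Step.L) ∧ ¬(x = Step.L ∧ y = Step.U)

lemma not_bad_infix_of_chain' {w : List Step} (h : List.Chain' Good w) :
    ¬ [Step.U, Step.L] <:+: w ∧ ¬ [Step.L, Step.U] <:+: w := by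
  constructor
  · intro hin
    have := h.infix hin
    simp only [List.Chain', List.isChain_cons_cons] at this
    exact this.1.1 ⟨rfl, rfl⟩
  · intro hin
    have := h.infix hin
    simp only [List.Chain', List.isChain_cons_cons] at this
    exact this.1.2 ⟨rfl, rfl⟩

lemma chain'_repU_append {w : List Step} (h : List.Chain' Good w)
    (hh : ∀ y, w.head? = some y → Good Step.U y) :
    ∀ a, List.Chain' Good (List.replicate a Step.U ++ w) := by
  intro a
  induction a with
  | zero => simpa using h
  | succ m ih =>
      rw [List.replicate_succ, List.cons_append, List.Chain', List.isChain_cons]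
      refine ⟨?_, ih⟩
      intro y hy
      cases m with
      | zero =>
          simp only [List.replicate_zero, List.nil_append] at hy
          exact hh y hy
      | succ j =>
          rw [List.replicate_succ, List.cons_append, List.head?_cons] at hy
          injection hy with hy
          subst hy
          exact by simp [Good]

lemma chain'_repD_append {w : List Step} (h : List.Chain' Good w)
    (hh : ∀ y, w.head? = some y → Good Step.D y) :
    ∀ a, List.Chain' Good (List.replicate a Step.D ++ w) := by
  intro a
  induction a with
  | zero => simpa using h
  | succ m ih =>
      rw [List.replicate_succ, List.cons_append, List.Chain', List.isChain_cons]
      refine ⟨?_, ih⟩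
      intro y hy
      cases m with
      | zero =>
          simp only [List.replicate_zero, List.nil_append] at hy
          exact hh y hy
      | succ j =>
          rw [List.replicate_succ, List.cons_append, List.head?_cons] at hy
          injection hy with hy
          subst hy
          exact by simp [Good]

lemma good_DU : Good Step.D Step.U := by simp [Good]
lemma good_DL : Good Step.D Step.L := by simp [Good]
lemma good_DD : Good Step.D Step.D := by simp [Good]
lemma good_UD : Good Step.U Step.D := by simp [Good]
lemma good_LD : Good Step.L Step.D := by simp [Good]
lemma good_LL : Good Step.L Step.L := by simp [Good]

lemma head?_repD_append (k : ℕ) (hk : 1 ≤ k) (w : List Step) :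
    (List.replicate k Step.D ++ w).head? = some Step.D := by
  obtain ⟨m, rfl⟩ : ∃ m, k = m + 1 := ⟨k - 1, by omega⟩
  rw [List.replicate_succ]
  rfl

lemma chain'_boxForm (k : ℕ) (hk : 1 ≤ k) :
    ∀ (a : List ℕ), (∀ x ∈ a, 0 < x) → List.Chain' Good (boxForm k a) := by
  intro a
  induction a with
  | nil => intro _; simp [boxForm, List.Chain']
  | cons x rest ih =>
      intro hpos
      cases rest with
      | nil =>
          rw [boxForm_single]
          apply chain'_repU_append
          · apply chain'_repD_append
            · simp [List.Chain']
            · intro y hy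
              simp only [List.head?_cons] at hy
              injection hy with hy; subst hy; exact good_DL
          · intro y hy
            rw [head?_repD_append k hk] at hy
            injection hy with hy; subst hy; exact good_UD
      | cons b r =>
          rw [boxForm_cons]
          apply chain'_repU_append
          · apply chain'_repD_append
            · rw [List.Chain', List.isChain_cons_cons]
              refine ⟨good_LD, ?_⟩
              rw [List.isChain_cons]
              refine ⟨?_, ih (fun v hv => hpos v (by simp [hv]))⟩
              intro y hy
              obtain ⟨t, ht⟩ := boxForm_pos_head (hpos b (by simp)) r
              rw [ht, List.head?_cons] at hy
              injection hy with hy; subst hy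
              exact good_DU
            · intro y hy
              simp only [List.head?_cons] at hy
              injection hy with hy; subst hy; exact good_DL
          · intro y hy
            rw [head?_repD_append k hk] at hy
            injection hy with hy; subst hy; exact good_UD

/-! ### numOccurrences of boxForm -/

lemma numOcc_Urun (k : ℕ) (hk : 1 ≤ k) : ∀ (a : ℕ), 1 ≤ a → ∀ (t : List Step),
    numOccurrences (boxFactor k) (List.replicate a Step.U ++ (List.replicate k Step.D ++ (Step.L :: t)))
      = 1 + numOccurrences (boxFactor k) t := by
  intro a
  induction a with
  | zero => omega
  | succ m ih =>
      intro _ t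
      cases m with
      | zero =>
          simp only [List.replicate_succ, List.replicate_zero, List.cons_append, List.nil_append]
          rw [numOccurrences_cons]
          have hpre : boxFactor k <+: Step.U :: (List.replicate k Step.D ++ (Step.L :: t)) := by
            rw [boxFactor, List.cons_prefix_cons]
            refine ⟨rfl, ?_⟩
            refine ⟨t, ?_⟩
            simp
          rw [if_pos hpre]
          have hz : numOccurrences (boxFactor k) ((List.replicate k Step.D ++ [Step.L]) ++ t)
              = numOccurrences (boxFactor k) t := by
            apply numOccurrences_append_nonU
            intro c hc
            rcases List.mem_append.1 hc with h | h
            · rw [List.eq_of_mem_replicate h]; simp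
            · simp at h; rw [h]; simp
          rw [show List.replicate k Step.D ++ (Step.L :: t) = (List.replicate k Step.D ++ [Step.L]) ++ t by simp]
          rw [hz]
          omega
      | succ j =>
          rw [List.replicate_succ, List.cons_append, numOccurrences_cons]
          have hnpre : ¬ (boxFactor k <+: Step.U :: (List.replicate (j+1) Step.U ++ (List.replicate k Step.D ++ (Step.L :: t)))) := by
            rw [boxFactor, List.cons_prefix_cons]
            rintro ⟨-, hpre⟩
            obtain ⟨m', hk'⟩ : ∃ m', k = m' + 1 := ⟨k - 1, by omega⟩
            rw [hk', List.replicate_succ, List.replicate_succ, List.cons_append, List.cons_append,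
              List.cons_prefix_cons] at hpre
            exact absurd hpre.1 (by simp)
          rw [if_neg hnpre, ih (by omega) t]
          omega

lemma numOcc_boxForm (k : ℕ) (hk : 1 ≤ k) : ∀ (a : List ℕ), (∀ x ∈ a, 0 < x) →
    numOccurrences (boxFactor k) (boxForm k a) = a.length := by
  intro a
  induction a with
  | nil => intro _; simp [boxForm, numOccurrences_nil]
  | cons x rest ih =>
      intro hpos
      cases rest with
      | nil =>
          rw [boxForm_single,
            show List.replicate k Step.D ++ [Step.L] = List.replicate k Step.D ++ (Step.L :: []) by simp,
            numOcc_Urun k hk x (hpos x (by simp)) [], numOccurrences_nil]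
          simp
      | cons b r =>
          rw [boxForm_cons,
            show List.replicate k Step.D ++ (Step.L :: Step.D :: boxForm k (b :: r))
              = List.replicate k Step.D ++ (Step.L :: (Step.D :: boxForm k (b :: r))) by rfl,
            numOcc_Urun k hk x (hpos x (by simp)) _,
            numOccurrences_cons_ne k (by simp) _,
            ih (fun v hv => hpos v (by simp [hv]))]
          simp [List.length_cons]
          omega

/-! ### numLongAscents of boxForm -/

lemma laAux_boxForm (k : ℕ) (hk : 1 ≤ k) : ∀ (a : List ℕ), (∀ x ∈ a, 0 < x) →
    ∀ (p : Option Step), p ≠ some Step.U →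
    laAux p (boxForm k a) = a.countP (fun v => decide (2 ≤ v)) := by
  intro a
  induction a with
  | nil => intro _ p _; simp [boxForm, laAux]
  | cons x rest ih =>
      intro hpos p hp
      obtain ⟨m', hk'⟩ : ∃ m', k = m' + 1 := ⟨k - 1, by omega⟩
      cases rest with
      | nil =>
          rw [boxForm_single, laAux_repU (by rw [head?_repD_append k hk]; simp) hp (hpos x (by simp))]
          rw [hk', List.replicate_succ, List.cons_append, laAux_cons_nonU (by simp),
            laAux_repD m' [Step.L]]
          simp [laAux, List.countP_cons]
      | cons b r =>
          rw [boxForm_cons, laAux_repU (by rw [head?_repD_append k hk]; simp) hp (hpos x (by simp))]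
          have hsplit : List.replicate k Step.D = Step.D :: List.replicate m' Step.D := by
            rw [hk', List.replicate_succ]
          rw [hsplit, List.cons_append, laAux_cons_nonU (by simp),
            laAux_repD m' (Step.L :: Step.D :: boxForm k (b :: r)),
            laAux_cons_nonU (by simp), laAux_cons_nonU (by simp),
            ih (fun v hv => hpos v (by simp [hv])) (some Step.D) (by simp)]
          simp only [List.countP_cons, decide_eq_true_eq]
          omega

/-! ### Pre for boxForm -/

lemma pre_boxForm (k : ℕ) : ∀ (a : List ℕ) (c : ℕ), a ≠ [] →
    (∀ i, i < a.length → (k+2) * i ≤ c + (a.take i).sum) →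
    (c + a.sum + 1 = (k+2) * a.length) →
    Pre c (boxForm k a) := by
  intro a
  induction a with
  | nil => intro c h; exact absurd rfl h
  | cons x rest ih =>
      intro c _ hps hbal
      cases rest with
      | nil =>
          rw [boxForm_single]
          apply pre_repU
          have hcx : c + x = k + 1 := by
            simp at hbal; omega
          rw [show c + x = 1 + k by omega]
          exact pre_repD (pre_cons_L (pre_nil 0)) k
      | cons b r =>
          rw [boxForm_cons]
          apply pre_repU
          have h1 : (k+2) * 1 ≤ c + x := by
            have := hps 1 (by simp)
            simpa using this
          have hcx : k + 2 ≤ c + x := by omega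
          set c' := c + x - (k+2) with hc'
          have hrec : Pre c' (boxForm k (b :: r)) := by
            apply ih c' (by simp)
            · intro i hi
              have := hps (i+1) (by simp at hi ⊢; omega)
              have he : ((x :: b :: r).take (i+1)).sum = x + ((b :: r).take i).sum := by
                simp [List.take_succ_cons]
              have hmul : (k+2) * (i+1) = (k+2) * i + (k+2) := by ring
              omega
            · have he : (x :: b :: r).sum = x + (b :: r).sum := by simp
              have hmul : (k+2) * ((x :: b :: r).length) = (k+2) * ((b :: r).length) + (k+2) := by
                simp [List.length_cons]; ring
              omega
          have : Pre (c' + 2 + k) (List.replicate k Step.D ++ (Step.L :: Step.D :: boxForm k (b :: r))) := by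
            have h2 : Pre (c' + 2) (Step.L :: Step.D :: boxForm k (b :: r)) :=
              pre_cons_L (pre_cons_D hrec)
            have h3 := pre_repD h2 k
            convert h3 using 2
          rw [show c + x = c' + 2 + k by omega]
          exact this

/-! ### key structure lemma -/

lemma infix_of_cons {l w : List Step} (x : Step) (h : l <:+: w) : l <:+: x :: w :=
  h.trans (List.suffix_cons x w).isInfix

lemma key (k : ℕ) (hk : 1 ≤ k) :
    ∀ (N : ℕ) (w : List Step), w.length ≤ N →
    ¬ [Step.U, Step.L] <:+: w → ¬ [Step.L, Step.U] <:+: w →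
    (k+2) * numOccurrences (boxFactor k) w ≤ (countD w + countL w) + 1 ∧
    ((k+2) * numOccurrences (boxFactor k) w = (countD w + countL w) + 1 →
      ∃ a : List ℕ, (∀ x ∈ a, 0 < x) ∧ a.length = numOccurrences (boxFactor k) w ∧
        w = boxForm k a) := by
  intro N
  induction N with
  | zero =>
      intro w hw _ _
      have : w = [] := List.length_eq_zero_iff.1 (by omega)
      subst this
      rw [numOccurrences_nil]
      constructor
      · simp
      · intro h; simp at h
  | succ N ihN =>
      intro w hw hUL hLU
      cases w with
      | nil =>
          rw [numOccurrences_nil]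
          constructor
          · simp
          · intro h; simp at h
      | cons x w' =>
          have hUL' : ¬ [Step.U, Step.L] <:+: w' := fun h => hUL (infix_of_cons x h)
          have hLU' : ¬ [Step.L, Step.U] <:+: w' := fun h => hLU (infix_of_cons x h)
          cases x with
          | D =>
              obtain ⟨hb, -⟩ := ihN w' (by simp at hw; omega) hUL' hLU'
              rw [numOccurrences_cons_ne k (by simp) w']
              simp only [countD_cons, countL_cons]
              norm_num
              constructor
              · omega
              · intro h; exfalso; omega
          | L =>
              obtain ⟨hb, -⟩ := ihN w' (by simp at hw; omega) hUL' hLU'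
              rw [numOccurrences_cons_ne k (by simp) w']
              simp only [countD_cons, countL_cons]
              norm_num
              constructor
              · omega
              · intro h; exfalso; omega
          | U =>
              by_cases hpre : boxFactor k <+: Step.U :: w'
              · obtain ⟨r, hr⟩ := hpre
                rw [boxFactor] at hr
                simp only [List.cons_append] at hr
                have hw' : w' = (List.replicate k Step.D ++ [Step.L]) ++ r := by
                  injection hr with _ h2; exact h2.symm
                have hocc : numOccurrences (boxFactor k) (Step.U :: w')
                    = numOccurrences (boxFactor k) w' + 1 := by
                  rw [numOccurrences_cons, if_pos]
                  exact ⟨r, by rw [boxFactor]; simp [hw']⟩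
                have hocc' : numOccurrences (boxFactor k) w' = numOccurrences (boxFactor k) r := by
                  rw [hw']
                  apply numOccurrences_append_nonU
                  intro c hc
                  rcases List.mem_append.1 hc with h | h
                  · rw [List.eq_of_mem_replicate h]; simp
                  · simp at h; rw [h]; simp
                have hcounts : countD (Step.U :: w') = k + countD r ∧
                    countL (Step.U :: w') = 1 + countL r := by
                  subst hw'
                  constructor <;>
                  · simp only [countD_cons, countL_cons, countD, countL, List.count_append,
                      List.count_replicate, List.count_cons, List.count_nil]
                    simp
                cases r with
                | nil =>
                    rw [hocc, hocc', numOccurrences_nil]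
                    constructor
                    · have h1 : countD (Step.U :: w') + countL (Step.U :: w') = k + 1 := by
                        rw [hcounts.1, hcounts.2]
                        simp [countD, countL]
                      omega
                    · intro _
                      refine ⟨[1], by simp, ?_, ?_⟩
                      · simp
                      · rw [boxForm_single, hw']
                        simp [List.replicate_succ]
                | cons y v =>
                    have hy : y ≠ Step.U := by
                      rintro rfl
                      apply hLU
                      refine ⟨Step.U :: List.replicate k Step.D, v, ?_⟩
                      rw [hw']
                      simp
                    have hoccr : numOccurrences (boxFactor k) (y :: v)
                        = numOccurrences (boxFactor k) v := numOccurrences_cons_ne k hy v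
                    have hvinf : ∀ l : List Step, l <:+: v → l <:+: Step.U :: w' := by
                      intro l hl
                      apply infix_of_cons
                      rw [hw']
                      exact hl.trans ((List.suffix_cons y v).isInfix.trans
                        (List.suffix_append _ _).isInfix)
                    have hrec := ihN v (by subst hw'; simp at hw ⊢; omega)
                      (fun h => hUL (hvinf _ h)) (fun h => hLU (hvinf _ h))

                    have hcDL : countD (Step.U :: w') + countL (Step.U :: w')
                        = (k + 2) + (countD v + countL v) := by
                      subst hw'
                      cases y with
                      | U => exact absurd rfl hy
                      | D =>
                          simp only [countD_cons, countL_cons, countD, countL, List.count_append,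
                            List.count_replicate, List.count_cons, List.count_nil]
                          simp
                          all_goals omega
                      | L =>
                          simp only [countD_cons, countL_cons, countD, countL, List.count_append,
                            List.count_replicate, List.count_cons, List.count_nil]
                          simp
                          all_goals omega
                    have hmul : (k+2) * (numOccurrences (boxFactor k) v + 1)
                        = (k+2) * numOccurrences (boxFactor k) v + (k+2) := by ring
                    constructor
                    · rw [hocc, hocc', hoccr]
                      omega
                    · intro heq
                      rw [hocc, hocc', hoccr] at heq
                      have heqv : (k+2) * numOccurrences (boxFactor k) v
                          = (countD v + countL v) + 1 := by omega
                      obtain ⟨a, hapos, halen, hav⟩ := hrec.2 heqv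
                      have hvpos : 1 ≤ numOccurrences (boxFactor k) v := by
                        rcases Nat.eq_zero_or_pos (numOccurrences (boxFactor k) v) with h0 | h1
                        · rw [h0] at heqv; omega
                        · exact h1
                      have : a ≠ [] := by
                        intro h; rw [h] at halen; simp at halen; omega
                      obtain ⟨a₁, rest, rfl⟩ : ∃ a₁ rest, a = a₁ :: rest := by
                        cases a with
                        | nil => exact absurd rfl this
                        | cons a₁ rest => exact ⟨a₁, rest, rfl⟩
                      have hyD : y = Step.D := by
                        cases y with
                        | U => exact absurd rfl hy
                        | D => rfl
                        | L =>
                            exfalso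
                            apply hLU
                            obtain ⟨t, ht⟩ := boxForm_pos_head (hapos a₁ (by simp)) rest
                            rw [← hav] at ht
                            refine ⟨Step.U :: (List.replicate k Step.D ++ [Step.L]), t, ?_⟩
                            rw [hw', ht]
                            simp
                      subst hyD
                      refine ⟨1 :: a₁ :: rest, ?_, ?_, ?_⟩
                      · intro z hz
                        rcases List.mem_cons.1 hz with h | h
                        · omega
                        · exact hapos z h
                      · rw [hocc, hocc', hoccr, ← halen]
                        simp
                      · rw [boxForm_cons, hw', hav]
                        simp [List.replicate_succ]
              · have hocc : numOccurrences (boxFactor k) (Step.U :: w')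
                    = numOccurrences (boxFactor k) w' := by
                  rw [numOccurrences_cons, if_neg hpre]
                  simp
                have hc : countD (Step.U :: w') + countL (Step.U :: w')
                    = countD w' + countL w' := by
                  simp [countD_cons, countL_cons]
                have hrec := ihN w' (by simp at hw; omega) hUL' hLU'
                constructor
                · rw [hocc, hc]; exact hrec.1
                · intro heq
                  rw [hocc, hc] at heq
                  obtain ⟨a, hapos, halen, hav⟩ := hrec.2 heq
                  have hvpos : 1 ≤ numOccurrences (boxFactor k) w' := by
                    rcases Nat.eq_zero_or_pos (numOccurrences (boxFactor k) w') with h0 | h1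
                    · rw [h0] at heq; omega
                    · exact h1
                  obtain ⟨a₁, rest, rfl⟩ : ∃ a₁ rest, a = a₁ :: rest := by
                    cases a with
                    | nil => rw [← halen] at hvpos; simp at hvpos
                    | cons a₁ rest => exact ⟨a₁, rest, rfl⟩
                  refine ⟨(a₁ + 1) :: rest, ?_, ?_, ?_⟩
                  · intro z hz
                    rcases List.mem_cons.1 hz with h | h
                    · omega
                    · exact hapos z (by simp [h])
                  · rw [hocc, ← halen]; simp
                  · rw [boxForm_succ_cons, ← hav]

/-! ### block prefixes, forward partial sums -/

def fullBlock (k x : ℕ) : List Step :=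
  List.replicate x Step.U ++ List.replicate k Step.D ++ [Step.L, Step.D]

def blocksList (k : ℕ) (b : List ℕ) : List Step := (b.map (fullBlock k)).flatten

lemma boxForm_split (k : ℕ) : ∀ (b c : List ℕ), c ≠ [] →
    boxForm k (b ++ c) = blocksList k b ++ boxForm k c := by
  intro b
  induction b with
  | nil => intro c _; simp [blocksList]
  | cons x b' ih =>
      intro c hc
      have hbc : b' ++ c ≠ [] := by simp [hc]
      obtain ⟨z, t, hzt⟩ : ∃ z t, b' ++ c = z :: t := by
        cases h : b' ++ c with
        | nil => exact absurd h hbc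
        | cons z t => exact ⟨z, t, rfl⟩
      have : boxForm k (x :: (b' ++ c)) = fullBlock k x ++ boxForm k (b' ++ c) := by
        rw [hzt, boxForm_cons, fullBlock]
        simp
      rw [List.cons_append, this, ih c hc]
      simp [blocksList]

lemma countU_blocksList (k : ℕ) : ∀ (b : List ℕ), countU (blocksList k b) = b.sum := by
  intro b
  induction b with
  | nil => simp [blocksList, countU]
  | cons x b' ih =>
      simp only [blocksList, List.map_cons, List.flatten_cons] at *
      simp only [countU, List.count_append] at *
      rw [ih]
      simp [fullBlock, List.count_append, List.count_replicate]

lemma countDL_blocksList (k : ℕ) : ∀ (b : List ℕ),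
    countD (blocksList k b) + countL (blocksList k b) = (k+2) * b.length := by
  intro b
  induction b with
  | nil => simp [blocksList, countD, countL]
  | cons x b' ih =>
      simp only [blocksList, List.map_cons, List.flatten_cons] at *
      simp only [countD, countL, List.count_append] at *
      have hblk : (fullBlock k x).count Step.D + (fullBlock k x).count Step.L = k + 2 := by
        simp [fullBlock, List.count_append, List.count_replicate]
      have : (k+2) * (b'.length + 1) = (k+2) * b'.length + (k+2) := by ring
      simp only [List.length_cons]
      omega

lemma ps_of_skew (k : ℕ) (a : List ℕ)
    (h1 : ∀ p, p <+: boxForm k a → countD p + countL p ≤ countU p) :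
    ∀ i, i < a.length → (k+2) * i ≤ (a.take i).sum := by
  intro i hi
  have hdrop : a.drop i ≠ [] := by
    intro h
    rw [List.drop_eq_nil_iff] at h
    omega
  have hsplit : boxForm k a = blocksList k (a.take i) ++ boxForm k (a.drop i) := by
    conv_lhs => rw [← List.take_append_drop i a]
    exact boxForm_split k _ _ hdrop
  have hpre : blocksList k (a.take i) <+: boxForm k a := ⟨boxForm k (a.drop i), hsplit.symm⟩
  have := h1 _ hpre
  rw [countU_blocksList, countDL_blocksList] at this
  have hlen : (a.take i).length = i := by
    rw [List.length_take]; omega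
  rw [hlen] at this
  exact this

/-! ### injectivity -/

lemma repU_D_inj : ∀ (m m' : ℕ) (s s' : List Step),
    List.replicate m Step.U ++ Step.D :: s = List.replicate m' Step.U ++ Step.D :: s' →
    m = m' ∧ s = s' := by
  intro m
  induction m with
  | zero =>
      intro m' s s' h
      cases m' with
      | zero => simp at h; exact ⟨rfl, h⟩
      | succ j => rw [List.replicate_succ] at h; simp at h
  | succ i ih =>
      intro m' s s' h
      cases m' with
      | zero => rw [List.replicate_succ] at h; simp at h
      | succ j =>
          rw [List.replicate_succ, List.replicate_succ] at h
          simp only [List.cons_append, List.cons.injEq] at h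
          obtain ⟨he, hs⟩ := ih j s s' h.2
          exact ⟨by omega, hs⟩

lemma boxForm_tail_eq (k : ℕ) (hk : 1 ≤ k) (x : ℕ) (r : List ℕ) :
    ∃ tl, boxForm k (x :: r) = List.replicate x Step.U ++ Step.D :: tl ∧
      tl = List.replicate (k-1) Step.D ++
        (match r with
         | [] => [Step.L]
         | b :: r' => Step.L :: Step.D :: boxForm k (b :: r')) := by
  obtain ⟨m', rfl⟩ : ∃ m', k = m' + 1 := ⟨k - 1, by omega⟩
  cases r with
  | nil =>
      refine ⟨List.replicate m' Step.D ++ [Step.L], ?_, by simp⟩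
      rw [boxForm_single, List.replicate_succ]
      simp
  | cons b r' =>
      refine ⟨List.replicate m' Step.D ++ (Step.L :: Step.D :: boxForm (m'+1) (b :: r')), ?_, by simp⟩
      rw [boxForm_cons, List.replicate_succ]
      simp

lemma boxForm_inj (k : ℕ) (hk : 1 ≤ k) : ∀ (a b : List ℕ),
    boxForm k a = boxForm k b → a = b := by
  intro a
  induction a with
  | nil =>
      intro b h
      cases b with
      | nil => rfl
      | cons y r =>
          exfalso
          obtain ⟨tl, htl, -⟩ := boxForm_tail_eq k hk y r
          rw [boxForm] at h
          rw [htl] at h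
          have := congrArg List.length h
          simp at this
  | cons x r ih =>
      intro b h
      cases b with
      | nil =>
          exfalso
          obtain ⟨tl, htl, -⟩ := boxForm_tail_eq k hk x r
          rw [htl] at h
          rw [boxForm] at h
          have := congrArg List.length h
          simp at this
      | cons y s =>
          obtain ⟨tl1, htl1, htl1e⟩ := boxForm_tail_eq k hk x r
          obtain ⟨tl2, htl2, htl2e⟩ := boxForm_tail_eq k hk y s
          rw [htl1, htl2] at h
          obtain ⟨hxy, htl⟩ := repU_D_inj x y tl1 tl2 h
          subst hxy
          rw [htl1e, htl2e] at htl
          have htail := List.append_cancel_left htl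
          cases r with
          | nil =>
              cases s with
              | nil => rfl
              | cons b s' =>
                  exfalso
                  simp at htail
          | cons b r' =>
              cases s with
              | nil =>
                  exfalso
                  simp at htail
              | cons c s' =>
                  simp only [List.cons.injEq] at htail
                  have := ih (c :: s') htail.2.2
                  rw [this]

/-! ### lists of positive naturals with prescribed big entries -/

lemma ones_of : ∀ (t : List ℕ), (∀ v ∈ t, 0 < v) → t.countP (fun v => decide (2 ≤ v)) = 0 →
    t = List.replicate t.length 1 := by
  intro t
  induction t with
  | nil => intro _ _; rfl
  | cons z t' ih =>
      intro hpos hc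
      rw [List.countP_cons] at hc
      have hz : z = 1 := by
        have := hpos z (by simp)
        by_cases h2 : 2 ≤ z
        · simp [h2] at hc
        · omega
      subst hz
      rw [List.length_cons, List.replicate_succ]
      have : t' = List.replicate t'.length 1 :=
        ih (fun v hv => hpos v (by simp [hv])) (by omega)
      rw [← this]

lemma one_big : ∀ (t : List ℕ), (∀ v ∈ t, 0 < v) → t.countP (fun v => decide (2 ≤ v)) = 1 →
    ∃ d y e, 2 ≤ y ∧ t = List.replicate d 1 ++ y :: List.replicate e 1 ∧ t.length = d + 1 + e := by
  intro t
  induction t with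
  | nil => intro _ h; simp at h
  | cons z t' ih =>
      intro hpos hc
      rw [List.countP_cons] at hc
      by_cases h2 : 2 ≤ z
      · have hc0 : t'.countP (fun v => decide (2 ≤ v)) = 0 := by
          have hif : (if decide (2 ≤ z) = true then 1 else 0) = 1 := by simp [h2]
          omega
        refine ⟨0, z, t'.length, h2, ?_, by simp; omega⟩
        rw [ones_of t' (fun v hv => hpos v (by simp [hv])) hc0]
        simp
      · have hz : z = 1 := by have := hpos z (by simp); omega
        subst hz
        have hc1 : t'.countP (fun v => decide (2 ≤ v)) = 1 := by
          have hif : (if decide (2 ≤ 1) = true then (1:ℕ) else 0) = 0 := by simp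
          omega
        obtain ⟨d, y, e, hy, ht, hl⟩ := ih (fun v hv => hpos v (by simp [hv])) hc1
        refine ⟨d + 1, y, e, hy, ?_, by simp only [List.length_cons, hl]; omega⟩
        rw [List.replicate_succ, List.cons_append, ht]

lemma rep_one_inj : ∀ (d d' y y' e e' : ℕ), 2 ≤ y → 2 ≤ y' →
    List.replicate d 1 ++ y :: List.replicate e 1 = List.replicate d' 1 ++ y' :: List.replicate e' 1 →
    d = d' ∧ y = y' ∧ e = e' := by
  intro d
  induction d with
  | zero =>
      intro d' y y' e e' hy hy' h
      cases d' with
      | zero =>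
          simp only [List.replicate_zero, List.nil_append] at h
          injection h with h1 h2
          have he : e = e' := by
            have := congrArg List.length h2
            simpa using this
          exact ⟨rfl, h1, he⟩
      | succ j =>
          rw [List.replicate_succ] at h
          simp at h
          omega
  | succ i ih =>
      intro d' y y' e e' hy hy' h
      cases d' with
      | zero =>
          rw [List.replicate_succ] at h
          simp at h
          omega
      | succ j =>
          rw [List.replicate_succ, List.replicate_succ] at h
          simp only [List.cons_append, List.cons.injEq] at h
          obtain ⟨hd, hrest⟩ := ih j y y' e e' hy hy' h.2
          exact ⟨by omega, hrest⟩

/-! ### sums of takes of the shape list -/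

lemma sum_take_shape_small (x y d e i : ℕ) (hi : 1 ≤ i) (hid : i ≤ d + 1) :
    (((x :: (List.replicate d 1 ++ y :: List.replicate e 1)).take i).sum) = x + (i - 1) := by
  obtain ⟨j, rfl⟩ : ∃ j, i = j + 1 := ⟨i - 1, by omega⟩
  rw [List.take_succ_cons, List.sum_cons]
  rw [List.take_append, List.take_replicate]
  have hj : j - (List.replicate d (1:ℕ)).length = 0 := by
    rw [List.length_replicate]; omega
  rw [hj, List.take_zero, List.append_nil, min_eq_left (by omega)]
  simp

lemma sum_take_shape_large (x y d e i : ℕ) (hid : d + 1 < i) (hi2 : i ≤ d + e + 2) :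
    (((x :: (List.replicate d 1 ++ y :: List.replicate e 1)).take i).sum) = x + d + y + (i - d - 2) := by
  obtain ⟨j, rfl⟩ : ∃ j, i = j + 1 := ⟨i - 1, by omega⟩
  rw [List.take_succ_cons, List.sum_cons]
  rw [List.take_append, List.take_replicate, min_eq_right (by omega)]
  have hj : j - (List.replicate d (1:ℕ)).length = (j - d - 1) + 1 := by
    rw [List.length_replicate]; omega
  rw [hj, List.take_succ_cons, List.take_replicate, min_eq_left (by omega)]
  simp only [List.sum_append, List.sum_replicate, List.sum_cons, smul_eq_mul, mul_one]
  omega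

/-! ### membership characterization -/

lemma mem_iff (k n : ℕ) (hk : 1 ≤ k) (hn : 1 ≤ n) (w : List Step) :
    (IsBoxPath k (n+1) w ∧ numLongAscents w = 2) ↔
    ∃ d x : ℕ, d < n ∧ (d+1)*(k+1)+1 ≤ x ∧ x ≤ (k+1)*(n+1) - 1 ∧
      w = boxForm k (x :: (List.replicate d 1 ++
        ((k+1)*(n+1)+1 - x) :: List.replicate (n-1-d) 1)) := by
  have hQ : 4 ≤ (k+1)*(n+1) := by
    have := Nat.mul_le_mul (show 2 ≤ k+1 by omega) (show 2 ≤ n+1 by omega)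
    omega
  have hexp1 : (k+2)*(n+1) = (k+1)*(n+1) + (n+1) := by ring
  constructor
  · rintro ⟨⟨⟨hprefix, hbal, hUL, hLU⟩, hsl, hocc⟩, hla⟩
    have hsl' : countU w = (k+2)*(n+1) - 1 := hsl
    have hDL : countD w + countL w + 1 = (k+2)*(n+1) := by omega
    have heq : (k+2) * numOccurrences (boxFactor k) w = (countD w + countL w) + 1 := by
      rw [hocc]; omega
    obtain ⟨a, hapos, halen, haw⟩ :=
      (key k hk w.length w le_rfl hUL hLU).2 heq
    rw [hocc] at halen
    have hsum : a.sum + 1 = (k+2)*(n+1) := by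
      have := countU_boxForm k a
      rw [← haw] at this
      omega
    have hps := ps_of_skew k a (by rw [← haw]; exact hprefix)
    have hcnt : a.countP (fun v => decide (2 ≤ v)) = 2 := by
      rw [← laAux_boxForm k hk a hapos none (by simp), ← haw,
        ← numLongAscents_eq_laAux, hla]
    obtain ⟨a₁, t, rfl⟩ : ∃ a₁ t, a = a₁ :: t := by
      cases a with
      | nil => simp at halen
      | cons a₁ t => exact ⟨a₁, t, rfl⟩
    have ha1 : k + 2 ≤ a₁ := by
      have := hps 1 (by rw [halen]; omega)
      simpa using this
    have htcnt : t.countP (fun v => decide (2 ≤ v)) = 1 := by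
      rw [List.countP_cons] at hcnt
      have : (if decide (2 ≤ a₁) = true then (1:ℕ) else 0) = 1 := by
        simp; omega
      omega
    obtain ⟨d, y, e, hy2, ht, htlen⟩ :=
      one_big t (fun v hv => hapos v (by simp [hv])) htcnt
    have hlent : t.length = n := by simp at halen; omega
    have hde : d + 1 + e = n := by omega
    subst ht
    have hsum2 : (a₁ :: (List.replicate d 1 ++ y :: List.replicate e 1)).sum
        = a₁ + d + y + e := by
      simp [List.sum_append, List.sum_replicate]
      omega
    have hxy : a₁ + y = (k+1)*(n+1) + 1 := by omega
    have hps2 := hps (d+1) (by rw [halen]; omega)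
    rw [sum_take_shape_small a₁ y d e (d+1) (by omega) (by omega)] at hps2
    have hexp2 : (k+2)*(d+1) = (d+1)*(k+1) + (d+1) := by ring
    refine ⟨d, a₁, by omega, by omega, by omega, ?_⟩
    rw [haw]
    have hye : y = (k+1)*(n+1)+1 - a₁ := by omega
    have hee : e = n - 1 - d := by omega
    rw [← hye, ← hee]
  · rintro ⟨d, x, hd, hx1, hx2, rfl⟩
    set y := (k+1)*(n+1)+1 - x with hy
    set e := n-1-d with he
    set A := x :: (List.replicate d 1 ++ y :: List.replicate e 1) with hA
    have hdk : 1*(k+1) ≤ (d+1)*(k+1) := Nat.mul_le_mul_right _ (by omega)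
    have hxk : k + 2 ≤ x := by omega
    have hxy : x + y = (k+1)*(n+1) + 1 := by omega
    have hy2 : 2 ≤ y := by omega
    have hpos : ∀ v ∈ A, 0 < v := by
      intro v hv
      rw [hA] at hv
      simp only [List.mem_cons, List.mem_append, List.mem_replicate] at hv
      rcases hv with h | h | h | h
      · omega
      · omega
      · omega
      · omega
    have hlen : A.length = n + 1 := by
      rw [hA]; simp; omega
    have hsum : A.sum = x + d + y + e := by
      rw [hA]; simp [List.sum_append, List.sum_replicate]; omega
    have hsum1 : A.sum + 1 = (k+2)*(n+1) := by omega
    have hps : ∀ i, i < A.length → (k+2) * i ≤ (A.take i).sum := by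
      intro i hi
      rw [hlen] at hi
      rcases Nat.eq_zero_or_pos i with h0 | hipos
      · subst h0; simp
      · by_cases hsmall : i ≤ d + 1
        · rw [hA, sum_take_shape_small x y d e i hipos hsmall]
          have hmm : i*(k+1) ≤ (d+1)*(k+1) := Nat.mul_le_mul_right _ (by omega)
          have hexp2 : (k+2)*i = i*(k+1) + i := by ring
          omega
        · rw [hA, sum_take_shape_large x y d e i (by omega) (by omega)]
          have hmm : (k+1)*i ≤ (k+1)*n := Nat.mul_le_mul_left _ (by omega)
          have hexp2 : (k+2)*i = (k+1)*i + i := by ring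
          have hexp3 : (k+1)*(n+1) = (k+1)*n + (k+1) := by ring
          omega
    have hA_ne : A ≠ [] := by rw [hA]; simp
    refine ⟨⟨⟨?_, ?_, ?_, ?_⟩, ?_, ?_⟩, ?_⟩
    · intro p hp
      have := pre_boxForm k A 0 hA_ne (by intro i hi; rw [Nat.zero_add]; exact hps i hi)
        (by rw [Nat.zero_add, hlen]; exact hsum1) p hp
      omega
    · rw [countU_boxForm]
      have := countDL_boxForm k A hA_ne
      rw [hlen] at this
      omega
    · exact (not_bad_infix_of_chain' (chain'_boxForm k hk A hpos)).1
    · exact (not_bad_infix_of_chain' (chain'_boxForm k hk A hpos)).2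
    · show countU _ = (k+2)*(n+1) - 1
      rw [countU_boxForm]
      omega
    · rw [numOcc_boxForm k hk A hpos, hlen]
    · rw [numLongAscents_eq_laAux, laAux_boxForm k hk A hpos none (by simp), hA]
      rw [List.countP_cons, List.countP_append, List.countP_cons, List.countP_replicate,
        List.countP_replicate]
      have e1 : decide (2 ≤ x) = true := by simp; omega
      have e2 : decide (2 ≤ y) = true := by simp; omega
      have e3 : decide (2 ≤ (1:ℕ)) = false := by simp
      rw [e1, e2, e3]
      simp


/-- The number of `k`-box paths of size `n+1` with exactly two long ascents equals
`n((k+1)(n+1) - 2)/2`, the `n`-th second `(k+3)`-gonal number (obtained by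
substituting `-n` into the formula `(n/2)((K-2)n - (K-4))` with `K = k+3`). -/
theorem statement14 (k n : ℕ) (hk : 1 ≤ k) (hn : 1 ≤ n) :
    (Nat.card {w : List Step // IsBoxPath k (n+1) w ∧ numLongAscents w = 2} : ℚ) =
      (n : ℚ) * (((k : ℚ)+1) * ((n : ℚ)+1) - 2) / 2 ∧
    (n : ℚ) * (((k : ℚ)+1) * ((n : ℚ)+1) - 2) / 2 =
      (-(n : ℚ)/2) * ((((k : ℚ)+3) - 2) * (-(n : ℚ)) - (((k : ℚ)+3) - 4)) := by
  have hQ : 4 ≤ (k+1)*(n+1) := by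
    have := Nat.mul_le_mul (show 2 ≤ k+1 by omega) (show 2 ≤ n+1 by omega)
    omega
  refine ⟨?_, by ring⟩
  set F : Finset ((_ : ℕ) × ℕ) :=
    (Finset.range n).sigma (fun d => Finset.Icc ((d+1)*(k+1)+1) ((k+1)*(n+1) - 1)) with hF
  set g : ((_ : ℕ) × ℕ) → List Step := fun p =>
    boxForm k (p.2 :: (List.replicate p.1 1 ++
      ((k+1)*(n+1)+1 - p.2) :: List.replicate (n-1-p.1) 1)) with hg
  have hmemF : ∀ p : ((_ : ℕ) × ℕ), p ∈ F ↔
      (p.1 < n ∧ (p.1+1)*(k+1)+1 ≤ p.2 ∧ p.2 ≤ (k+1)*(n+1) - 1) := by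
    intro p
    rw [hF, Finset.mem_sigma, Finset.mem_range, Finset.mem_Icc]
  have hiff : ∀ w : List Step,
      (IsBoxPath k (n+1) w ∧ numLongAscents w = 2) ↔ w ∈ F.image g := by
    intro w
    rw [mem_iff k n hk hn w]
    constructor
    · rintro ⟨d, x, hd, h1, h2, rfl⟩
      exact Finset.mem_image.2 ⟨⟨d, x⟩, (hmemF ⟨d, x⟩).2 ⟨hd, h1, h2⟩, rfl⟩
    · intro hw
      obtain ⟨p, hp, rfl⟩ := Finset.mem_image.1 hw
      obtain ⟨h1, h2, h3⟩ := (hmemF p).1 hp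
      exact ⟨p.1, p.2, h1, h2, h3, rfl⟩
  have hinj : ∀ p ∈ F, ∀ q ∈ F, g p = g q → p = q := by
    rintro ⟨d, x⟩ hp ⟨d', x'⟩ hq h
    obtain ⟨hd, hx1, hx2⟩ := (hmemF ⟨d, x⟩).1 hp
    obtain ⟨hd', hx1', hx2'⟩ := (hmemF ⟨d', x'⟩).1 hq
    have hx2x : x ≤ (k+1)*(n+1) - 1 := hx2
    rw [hg] at h
    have hl := boxForm_inj k hk _ _ h
    injection hl with hx hrest
    subst hx
    have hy2 : 2 ≤ (k+1)*(n+1)+1 - x := by omega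
    obtain ⟨hdd, -, -⟩ := rep_one_inj d d' _ _ _ _ hy2 hy2 hrest
    subst hdd
    rfl
  have hcard : Nat.card {w : List Step // IsBoxPath k (n+1) w ∧ numLongAscents w = 2}
      = F.card := by
    rw [Nat.card_congr (Equiv.subtypeEquivRight hiff)]
    rw [Nat.card_eq_finsetCard]
    exact Finset.card_image_of_injOn hinj
  have hterm : ∀ d ∈ Finset.range n,
      (Finset.Icc ((d+1)*(k+1)+1) ((k+1)*(n+1) - 1)).card = (k+1)*(n-d) - 1 := by
    intro d hd
    rw [Finset.mem_range] at hd
    rw [Nat.card_Icc]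
    have hsplit : (d+1)*(k+1) + (k+1)*(n-d) = (k+1)*(n+1) := by
      rw [mul_comm (d+1) (k+1), ← Nat.mul_add]
      congr 1
      omega
    have hB : 1*1 ≤ (k+1)*(n-d) := Nat.mul_le_mul (by omega) (by omega)
    omega
  have hcard2 : F.card * 2 = n * ((k+1)*(n+1) - 2) := by
    rw [hF, Finset.card_sigma, Finset.sum_congr rfl hterm]
    have hrefl : ∑ d ∈ Finset.range n, ((k+1)*(n-d) - 1)
        = ∑ j ∈ Finset.range n, ((k+1)*(j+1) - 1) := by
      rw [← Finset.sum_range_reflect (fun j => ((k+1)*(j+1) - 1)) n]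
      apply Finset.sum_congr rfl
      intro d hd
      rw [Finset.mem_range] at hd
      have : n - 1 - d + 1 = n - d := by omega
      rw [this]
    rw [hrefl]
    have hterm2 : ∀ j ∈ Finset.range n, (k+1)*(j+1) - 1 = (k+1)*j + k := by
      intro j _
      have : (k+1)*(j+1) = (k+1)*j + (k+1) := by ring
      omega
    rw [Finset.sum_congr rfl hterm2, Finset.sum_add_distrib, ← Finset.mul_sum,
      Finset.sum_const, Finset.card_range, smul_eq_mul]
    obtain ⟨m, rfl⟩ : ∃ m, n = m + 1 := ⟨n-1, by omega⟩
    have hgauss : (∑ j ∈ Finset.range (m+1), j) * 2 = (m+1) * m := by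
      rw [Finset.sum_range_id_mul_two]
      simp
    have hsub : (k+1)*(m+1+1) - 2 = (k+1)*m + 2*k := by
      have : (k+1)*(m+1+1) = (k+1)*m + 2*k + 2 := by ring
      omega
    rw [hsub]
    calc ((k+1) * (∑ j ∈ Finset.range (m+1), j) + (m+1) * k) * 2
        = (k+1) * ((∑ j ∈ Finset.range (m+1), j) * 2) + 2*(m+1)*k := by ring
      _ = (k+1) * ((m+1) * m) + 2*(m+1)*k := by rw [hgauss]
      _ = (m+1) * ((k+1)*m + 2*k) := by ring
  rw [hcard]
  have h2 : 2 ≤ (k+1)*(n+1) := by omega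
  have hcast : (F.card : ℚ) * 2 = (n : ℚ) * (((k:ℚ)+1)*((n:ℚ)+1) - 2) := by
    qify [h2] at hcard2
    linarith [hcard2]
  linarith [hcast]
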